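/- For integers d2 ≥ d1 ≥ 2 and any real k ∈ [-d1/d2, 1], the quadratic ω₀(k) = (d1d2³ - 2d1d2² - d2³ - 2d1d2 + d2²)k² + (2d1²d2² - 2d1²d2 - 2d1d2² - 4d1² + 4d1d2)k + d1³d2 - d1²d2 + 4d1² is strictly positive. -/
import Mathlib

/-- ω₀(k) > 0 for k ∈ [-d1/d2, 1]. -/
theorem stmt_5 (d1 d2 : ℕ) (h1 : 2 ≤ d1) (h2 : d1 ≤ d2) (k : ℝ)
    (hk1 : -(d1 : ℝ)/d2 ≤ k) (hk2 : k ≤ 1) :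
    0 < ((d1:ℝ)*d2^3 - 2*d1*d2^2 - d2^3 - 2*d1*d2 + d2^2) * k^2
      + (2*(d1:ℝ)^2*d2^2 - 2*d1^2*d2 - 2*d1*d2^2 - 4*d1^2 + 4*d1*d2) * k
      + (d1:ℝ)^3*d2 - d1^2*d2 + 4*d1^2 := by
  have hd1 : (2:ℝ) ≤ (d1:ℝ) := by exact_mod_cast h1
  have hd2 : (d1:ℝ) ≤ (d2:ℝ) := by exact_mod_cast h2
  set a : ℝ := (d1:ℝ) with ha
  set b : ℝ := (d2:ℝ) with hb
  have ha0 : (0:ℝ) < a := by linarith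
  have hb0 : (0:ℝ) < b := by linarith
  set x : ℝ := b*k + a with hxdef
  set y : ℝ := 1 - k with hydef
  have hx : 0 ≤ x := by
    have h' : -a ≤ k * b := (div_le_iff₀ hb0).mp hk1
    rw [hxdef]; nlinarith
  have hy : 0 ≤ y := by rw [hydef]; linarith
  have hxy : b*y + x = a + b := by rw [hxdef, hydef]; ring
  have hP : 0 < a^2*b^4 + 2*a^3*b^3 := by
    have := mul_pos (pow_pos ha0 2) (pow_pos hb0 4)
    have := mul_pos (pow_pos ha0 3) (pow_pos hb0 3)
    linarith
  have hQ : 0 ≤ 2*a*b^4 + 4*a^2*b^3 + 2*a^2*b^4 + 4*a^3*b^2 + 2*a^3*b^3 := by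
    have := mul_pos ha0 (pow_pos hb0 4)
    have := mul_pos (pow_pos ha0 2) (pow_pos hb0 3)
    have := mul_pos (pow_pos ha0 2) (pow_pos hb0 4)
    have := mul_pos (pow_pos ha0 3) (pow_pos hb0 2)
    have := mul_pos (pow_pos ha0 3) (pow_pos hb0 3)
    linarith
  have hg : 0 < (a-1)*b^2 + (2*a^2-4*a+1)*b + a*(a-1)*(a-2) := by
    have t1 : 0 < (a-1)*b^2 := mul_pos (by linarith) (pow_pos hb0 2)
    have t2 : 0 ≤ (2*a^2-4*a+1)*b :=
      mul_nonneg (by nlinarith [sq_nonneg (a-2)]) hb0.le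
    have t3 : 0 ≤ a*(a-1)*(a-2) :=
      mul_nonneg (mul_nonneg (by linarith) (by linarith)) (by linarith)
    linarith
  have hR : 0 < b^3 * ((a-1)*b^2 + (2*a^2-4*a+1)*b + a*(a-1)*(a-2)) :=
    mul_pos (pow_pos hb0 3) hg
  have key : (a+b)^2*b^2 * (((a:ℝ)*b^3 - 2*a*b^2 - b^3 - 2*a*b + b^2) * k^2
      + (2*a^2*b^2 - 2*a^2*b - 2*a*b^2 - 4*a^2 + 4*a*b) * k
      + a^3*b - a^2*b + 4*a^2)
      = (a^2*b^4 + 2*a^3*b^3)*y^2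
        + (2*a*b^4 + 4*a^2*b^3 + 2*a^2*b^4 + 4*a^3*b^2 + 2*a^3*b^3)*(x*y)
        + (b^3 * ((a-1)*b^2 + (2*a^2-4*a+1)*b + a*(a-1)*(a-2)))*x^2 := by
    rw [hxdef, hydef]; ring
  have hcase : 0 < x ∨ 0 < y := by
    rcases eq_or_lt_of_le hx with h|h
    · right; nlinarith
    · left; exact h
  have hRHS : 0 < (a^2*b^4 + 2*a^3*b^3)*y^2
        + (2*a*b^4 + 4*a^2*b^3 + 2*a^2*b^4 + 4*a^3*b^2 + 2*a^3*b^3)*(x*y)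
        + (b^3 * ((a-1)*b^2 + (2*a^2-4*a+1)*b + a*(a-1)*(a-2)))*x^2 := by
    have q1 : 0 ≤ (a^2*b^4 + 2*a^3*b^3)*y^2 := mul_nonneg hP.le (sq_nonneg y)
    have q2 : 0 ≤ (2*a*b^4 + 4*a^2*b^3 + 2*a^2*b^4 + 4*a^3*b^2 + 2*a^3*b^3)*(x*y) :=
      mul_nonneg hQ (mul_nonneg hx hy)
    have q3 : 0 ≤ (b^3 * ((a-1)*b^2 + (2*a^2-4*a+1)*b + a*(a-1)*(a-2)))*x^2 :=
      mul_nonneg hR.le (sq_nonneg x)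
    rcases hcase with h|h
    · have : 0 < (b^3 * ((a-1)*b^2 + (2*a^2-4*a+1)*b + a*(a-1)*(a-2)))*x^2 :=
        mul_pos hR (pow_pos h 2)
      linarith
    · have : 0 < (a^2*b^4 + 2*a^3*b^3)*y^2 := mul_pos hP (pow_pos h 2)
      linarith
  have hD : 0 < (a+b)^2*b^2 := mul_pos (pow_pos (by linarith) 2) (pow_pos hb0 2)
  by_contra hcon
  push_neg at hcon
  have := mul_nonpos_of_nonneg_of_nonpos hD.le hcon
  linarith [key ▸ hRHS]
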